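/- Let μ and ν be atomless probability measures on ℝ with finite first moments, and let f' < x' < x'' < g'' and K₂ < K₁ be reals with f' < K₂ and x'' < K₁ < g''. Suppose μ((f',x')) = ν((f',x')), ∫_{(f',x')} w dμ(w) = ∫_{(f',x')} w dν(w), μ((x',x'')) = ν((x',g'')), and ∫_{(x',x'')} w dμ(w) = ∫_{(x',g'')} w dν(w). Set Θ₂ = (K₁ − x'')/(g'' − x''), Δ = (g'' − x')·Θ₂, Θ₁ = ((K₂ − f') − Δ)/(x' − f'), and D(k) = P_ν(k) − P_μ(k). Then P_μ(x'') + (K₁ − x'')·μ((−∞,x'')) + D(f') + (K₂ − f')·(ν((−∞,f')) − μ((−∞,f'))) = Θ₂·P_ν(g'') + (1 − Θ₁)·D(f') + (1 − Θ₂)·P_μ(x'') + (Θ₁ − Θ₂)·D(x'); i.e. the model-based expected payoff of the American put equals the cost of the superhedge generated by the piecewise-linear function ψ^{x',x''}. -/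

import Mathlib

open MeasureTheory Set

/-- The put price function `P_η(k) = ∫ (k-x)⁺ dη(x)`. -/
noncomputable def putPrice (η : Measure ℝ) (k : ℝ) : ℝ := ∫ x, max (k - x) 0 ∂η


lemma putPrice_eq (η : Measure ℝ) [IsFiniteMeasure η]
    (hint : Integrable (fun w => w) η) (k : ℝ) :
    putPrice η k = k * (η (Iio k)).toReal - ∫ x in Iio k, x ∂η := by
  have h1 : ∀ x : ℝ, max (k - x) 0 = (Iio k).indicator (fun x => k - x) x := by
    intro x
    by_cases hx : x < k
    · rw [Set.indicator_of_mem (show x ∈ Iio k from hx), max_eq_left (by linarith)]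
    · rw [Set.indicator_of_notMem (show x ∉ Iio k from hx), max_eq_right (by simp at hx; linarith)]
  rw [putPrice, integral_congr_ae (Filter.Eventually.of_forall h1),
    integral_indicator measurableSet_Iio,
    integral_sub (integrable_const k).integrableOn hint.integrableOn,
    setIntegral_const, smul_eq_mul, measureReal_def]
  ring

lemma mass_split (η : Measure ℝ) [IsFiniteMeasure η] [NullSingletonClass η] {a b : ℝ} (hab : a < b) :
    (η (Ioo a b)).toReal = (η (Iio b)).toReal - (η (Iio a)).toReal := by
  have h : η (Iio b) = η (Iic a) + η (Ioo a b) := by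
    rw [← Iic_union_Ioo_eq_Iio hab,
      measure_union ((Set.Iic_disjoint_Ioi le_rfl).mono_right Set.Ioo_subset_Ioi_self) measurableSet_Ioo]
  have h2 : η (Iic a) = η (Iio a) := (measure_congr Iio_ae_eq_Iic).symm
  rw [h2] at h
  rw [h, ENNReal.toReal_add (measure_ne_top _ _) (measure_ne_top _ _)]
  ring

lemma int_split (η : Measure ℝ) [NullSingletonClass η]
    (hint : Integrable (fun w => w) η) {a b : ℝ} (hab : a < b) :
    ∫ x in Ioo a b, x ∂η = (∫ x in Iio b, x ∂η) - ∫ x in Iio a, x ∂η := by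
  have h : ∫ x in Iio b, x ∂η = (∫ x in Iic a, x ∂η) + ∫ x in Ioo a b, x ∂η := by
    rw [← Iic_union_Ioo_eq_Iio hab,
      setIntegral_union ((Set.Iic_disjoint_Ioi le_rfl).mono_right Set.Ioo_subset_Ioi_self) measurableSet_Ioo
        hint.integrableOn hint.integrableOn]
  rw [setIntegral_congr_set (Iio_ae_eq_Iic (μ := η) (a := a)).symm] at h
  linarith

/-- `π` is a martingale coupling of `μ` and `ν`. -/
def IsMartingaleCoupling (μ ν : Measure ℝ) (π : Measure (ℝ × ℝ)) : Prop :=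
  IsProbabilityMeasure π ∧ π.map Prod.fst = μ ∧ π.map Prod.snd = ν ∧
    ∀ B : Set ℝ, MeasurableSet B →
      ∫ p in B ×ˢ (Set.univ : Set ℝ), p.2 ∂π = ∫ x in B, x ∂μ

/-- The American-put payoff under coupling `π` and exercise set `B`. -/
noncomputable def amPayoff (K₁ K₂ : ℝ) (π : Measure (ℝ × ℝ)) (B : Set ℝ) : ℝ :=
  ∫ p, (B.indicator (fun x => max (K₁ - x) 0) p.1
      + Bᶜ.indicator (fun _ => max (K₂ - p.2) 0) p.1) ∂π

/-- Region `G`: the model-based expected payoff of the American put equals the cost of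
the superhedge generated by the piecewise-linear function `ψ^{x',x''}`. -/
theorem mbep_eq_hc_region_G
    (μ ν : Measure ℝ) [IsProbabilityMeasure μ] [IsProbabilityMeasure ν]
    (hμint : Integrable (fun w => w) μ) (hνint : Integrable (fun w => w) ν)
    (hμa : ∀ w : ℝ, μ {w} = 0) (hνa : ∀ w : ℝ, ν {w} = 0)
    (f' x' x'' g'' K₁ K₂ : ℝ)
    (h1 : f' < x') (h2 : x' < x'') (h3 : x'' < g'') (hK : K₂ < K₁)
    (h4 : f' < K₂) (h5 : x'' < K₁) (h6 : K₁ < g'')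
    (hmass1 : μ (Set.Ioo f' x') = ν (Set.Ioo f' x'))
    (hmean1 : ∫ w in Set.Ioo f' x', w ∂μ = ∫ w in Set.Ioo f' x', w ∂ν)
    (hmass2 : μ (Set.Ioo x' x'') = ν (Set.Ioo x' g''))
    (hmean2 : ∫ w in Set.Ioo x' x'', w ∂μ = ∫ w in Set.Ioo x' g'', w ∂ν)
    (Θ₂ Δ Θ₁ : ℝ)
    (hΘ₂ : Θ₂ = (K₁ - x'') / (g'' - x''))
    (hΔ : Δ = (g'' - x') * Θ₂)
    (hΘ₁ : Θ₁ = ((K₂ - f') - Δ) / (x' - f')) :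
    putPrice μ x'' + (K₁ - x'') * (μ (Set.Iio x'')).toReal
        + (putPrice ν f' - putPrice μ f')
        + (K₂ - f') * ((ν (Set.Iio f')).toReal - (μ (Set.Iio f')).toReal)
      = Θ₂ * putPrice ν g''
        + (1 - Θ₁) * (putPrice ν f' - putPrice μ f')
        + (1 - Θ₂) * putPrice μ x''
        + (Θ₁ - Θ₂) * (putPrice ν x' - putPrice μ x') := by
  haveI : NullSingletonClass μ := ⟨hμa⟩
  haveI : NullSingletonClass ν := ⟨hνa⟩
  have r1 : (μ (Iio x')).toReal - (μ (Iio f')).toReal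
      = (ν (Iio x')).toReal - (ν (Iio f')).toReal := by
    rw [← mass_split μ h1, ← mass_split ν h1, hmass1]
  have r3 : (μ (Iio x'')).toReal - (μ (Iio x')).toReal
      = (ν (Iio g'')).toReal - (ν (Iio x')).toReal := by
    rw [← mass_split μ h2, ← mass_split ν (h2.trans h3), hmass2]
  have r2 : (∫ x in Iio x', x ∂μ) - ∫ x in Iio f', x ∂μ
      = (∫ x in Iio x', x ∂ν) - ∫ x in Iio f', x ∂ν := by
    rw [← int_split μ hμint h1, ← int_split ν hνint h1, hmean1]
  have r4 : (∫ x in Iio x'', x ∂μ) - ∫ x in Iio x', x ∂μ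
      = (∫ x in Iio g'', x ∂ν) - ∫ x in Iio x', x ∂ν := by
    rw [← int_split μ hμint h2, ← int_split ν hνint (h2.trans h3), hmean2]
  have e1 : Θ₂ * (g'' - x'') = K₁ - x'' := by
    rw [hΘ₂, div_mul_cancel₀ _ (show g'' - x'' ≠ 0 by linarith)]
  have e2 : Θ₁ * (x' - f') = (K₂ - f') - (g'' - x') * Θ₂ := by
    rw [hΘ₁, hΔ, div_mul_cancel₀ _ (show x' - f' ≠ 0 by linarith)]
  rw [putPrice_eq μ hμint, putPrice_eq μ hμint, putPrice_eq μ hμint,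
      putPrice_eq ν hνint, putPrice_eq ν hνint, putPrice_eq ν hνint]
  linear_combination (-(μ (Iio x'')).toReal) * e1 + (Θ₂ * g'') * r3 + (-Θ₂) * r4
    + (Θ₂ * g'' + (Θ₁ - Θ₂) * x') * r1 + (-Θ₁) * r2
    + ((μ (Iio f')).toReal - (ν (Iio f')).toReal) * e2
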